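/- The numerical semigroup generated by q^2 - 2q0q + q, q^2 - q0q + q0, q^2 - q + 2q0, q^2, q^2 + 1, where q = 2^(2s+1) and q0 = 2^s, has genus (q^3 - 2q^2 + q)/2. -/

import Mathlib

open Finset
namespace Skab
def A (R:ℕ) : ℕ := 4*(R+1)^3*R + 2*(R+1)^2
def Bb (R:ℕ) : ℕ := (R+1)*(4*R^3+10*R^2+8*R+3)
def Cc (R:ℕ) : ℕ := (R+1)*(4*R^3+12*R^2+10*R+4)
def Dd (R:ℕ) : ℕ := 4*(R+1)^4
def Ee (R:ℕ) : ℕ := 4*(R+1)^4+1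
def E2 (R:ℕ) : ℕ := 2*(R+1)*R+1


lemma rel1 (R:ℕ) : E2 R * Dd R = (2*(R+1)^2) * A R := by unfold E2 Dd A; ring
lemma rel2 (R:ℕ) : (R+1) * Cc R = (R+2) * A R := by unfold Cc A; ring
lemma rel3 (R:ℕ) : 2 * Bb R = A R + Cc R := by unfold Bb A Cc; ring
lemma rel4 (R:ℕ) : (R+1) * Ee R = (R+1) * A R + Bb R := by unfold Ee A Bb; ring

lemma norm (R x y z u v : ℕ) : ∃ x' y' z' u' v', y' < E2 R ∧ z' < R+1 ∧ u' < 2 ∧ v' < R+1 ∧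
    x'*A R + y'*Dd R + z'*Cc R + u'*Bb R + v'*Ee R
      = x*A R + y*Dd R + z*Cc R + u*Bb R + v*Ee R := by
  set Q := R+1 with hQ
  obtain ⟨qv, rv, hv, hrv⟩ : ∃ qv rv, Q*qv + rv = v ∧ rv < Q :=
    ⟨v/Q, v%Q, Nat.div_add_mod v Q, Nat.mod_lt _ (by omega)⟩
  obtain ⟨qu, ru, hu, hru⟩ : ∃ qu ru, 2*qu + ru = u + qv ∧ ru < 2 :=
    ⟨(u+qv)/2, (u+qv)%2, Nat.div_add_mod _ 2, Nat.mod_lt _ (by omega)⟩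
  obtain ⟨qz, rz, hz, hrz⟩ : ∃ qz rz, Q*qz + rz = z + qu ∧ rz < Q :=
    ⟨(z+qu)/Q, (z+qu)%Q, Nat.div_add_mod _ Q, Nat.mod_lt _ (by omega)⟩
  obtain ⟨qy, ry, hy, hry⟩ : ∃ qy ry, E2 R * qy + ry = y ∧ ry < E2 R :=
    ⟨y/E2 R, y%E2 R, Nat.div_add_mod _ _, Nat.mod_lt _ (by unfold E2; omega)⟩
  refine ⟨x + qv*Q + qu + qz*(Q+1) + qy*(2*Q^2), ry, rz, ru, rv, hry, hrz, hru, hrv, ?_⟩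
  have r1 := rel1 R; have r2 := rel2 R; have r3 := rel3 R; have r4 := rel4 R
  zify at hv hu hz hy r1 r2 r3 r4 ⊢
  rw [hQ] at *
  push_cast at hv hz ⊢
  linear_combination (Dd R : ℤ)*hy + (Cc R:ℤ)*hz + (Bb R:ℤ)*hu + (Ee R:ℤ)*hv
    - (qy:ℤ)*r1 - (qz:ℤ)*r2 - (qu:ℤ)*r3 - (qv:ℤ)*r4

lemma mem_closure_iff (R n : ℕ) :
    n ∈ AddSubmonoid.closure ({A R, Bb R, Cc R, Dd R, Ee R} : Set ℕ) ↔
      ∃ x y z u v, n = x*A R + y*Dd R + z*Cc R + u*Bb R + v*Ee R := by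
  constructor
  · intro h
    induction h using AddSubmonoid.closure_induction with
    | mem m hm =>
      rcases hm with rfl|rfl|rfl|rfl|h
      · exact ⟨1,0,0,0,0, by simp⟩
      · exact ⟨0,0,0,1,0, by simp⟩
      · exact ⟨0,0,1,0,0, by simp⟩
      · exact ⟨0,1,0,0,0, by simp⟩
      · rw [Set.mem_singleton_iff] at h
        exact ⟨0,0,0,0,1, by simp [h]⟩
    | zero => exact ⟨0,0,0,0,0, by simp⟩
    | add m₁ m₂ _ _ ih₁ ih₂ =>
      obtain ⟨x,y,z,u,v,rfl⟩ := ih₁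
      obtain ⟨x',y',z',u',v',rfl⟩ := ih₂
      exact ⟨x+x', y+y', z+z', u+u', v+v', by ring⟩
  · rintro ⟨x,y,z,u,v,rfl⟩
    have hmem : ∀ w ∈ ({A R, Bb R, Cc R, Dd R, Ee R} : Set ℕ),
        w ∈ AddSubmonoid.closure ({A R, Bb R, Cc R, Dd R, Ee R} : Set ℕ) :=
      fun w hw => AddSubmonoid.subset_closure hw
    refine add_mem (add_mem (add_mem (add_mem ?_ ?_) ?_) ?_) ?_ <;>
      refine AddSubmonoid.nsmul_mem _ (hmem _ (by simp)) _

lemma digit {Q K K' v v' : ℕ} (h : Q*K + v = Q*K' + v') (hv : v < Q) (hv' : v' < Q) :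
    v = v' ∧ K = K' := by
  have h1 : (Q*K+v) % Q = v := by simp [Nat.mul_add_mod, Nat.mod_eq_of_lt hv]
  have h2 : (Q*K'+v') % Q = v' := by simp [Nat.mul_add_mod, Nat.mod_eq_of_lt hv']
  have hvv : v = v' := by rw [← h1, ← h2, h]
  subst hvv
  exact ⟨rfl, Nat.eq_of_mul_eq_mul_left (by omega) (Nat.add_right_cancel h)⟩

lemma inj (R : ℕ) {x y z u v x' y' z' u' v' : ℕ}
    (hy : y < E2 R) (hz : z < R+1) (hu : u < 2) (hv : v < R+1)
    (hy' : y' < E2 R) (hz' : z' < R+1) (hu' : u' < 2) (hv' : v' < R+1)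
    (h : x*A R + y*Dd R + z*Cc R + u*Bb R + v*Ee R
       = x'*A R + y'*Dd R + z'*Cc R + u'*Bb R + v'*Ee R) :
    x = x' ∧ y = y' ∧ z = z' ∧ u = u' ∧ v = v' := by
  set Q := R+1 with hQ
  -- level 1 : mod Q, digit v
  set K : ℕ → ℕ → ℕ → ℕ → ℕ → ℕ := fun x y z u v =>
    x*(2*(R+1)*(2*(R+1)*R+1)) + y*(4*(R+1)^3) + z*(4*R^3+12*R^2+10*R+4)
      + u*(4*R^3+10*R^2+8*R+3) + v*(4*(R+1)^3) with hK
  have hKe : ∀ x y z u v : ℕ, x*A R + y*Dd R + z*Cc R + u*Bb R + v*Ee R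
      = Q*(K x y z u v) + v := by
    intro a b c d e; simp only [hK, hQ, A, Bb, Cc, Dd, Ee, E2]; ring
  rw [hKe, hKe] at h
  obtain ⟨hv1, h⟩ := digit h hv hv'
  -- level 2 : mod 2, digit u
  set K2 : ℕ → ℕ → ℕ → ℕ → ℕ → ℕ := fun x y z u v =>
    x*((R+1)*(2*(R+1)*R+1)) + (y+v)*(2*(R+1)^3) + z*(2*R^3+6*R^2+5*R+2)
      + u*((R+1)^2*(2*R+1)) with hK2
  have hK2e : ∀ x y z u v : ℕ, K x y z u v = 2*(K2 x y z u v) + u := by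
    intro a b c d e; simp only [hK, hK2]; ring
  rw [hK2e, hK2e] at h
  obtain ⟨hu1, h⟩ := digit h hu hu'
  -- level 3 : mod Q, digit z
  set K3 : ℕ → ℕ → ℕ → ℕ → ℕ → ℕ := fun x y z u v =>
    x*(E2 R) + (y+v)*(2*(R+1)^2) + z*(2*R^2+4*R+1) + u*((R+1)*(2*R+1)) with hK3
  have hK3e : ∀ x y z u v : ℕ, K2 x y z u v = Q*(K3 x y z u v) + z := by
    intro a b c d e; simp only [hK2, hK3, E2, hQ]; ring
  rw [hK3e, hK3e] at h
  obtain ⟨hz1, h⟩ := digit h hz hz'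
  -- level 4 : cancel common, mod E2
  simp only [hK3, hz1, hu1, hv1] at h
  have h4 : x*(E2 R) + y*(2*(R+1)^2) = x'*(E2 R) + y'*(2*(R+1)^2) := by
    have hrw : ∀ t w : ℕ, t*(E2 R) + (w+v')*(2*(R+1)^2) + z'*(2*R^2+4*R+1) + u'*((R+1)*(2*R+1))
        = (t*(E2 R) + w*(2*(R+1)^2)) + (v'*(2*(R+1)^2) + z'*(2*R^2+4*R+1) + u'*((R+1)*(2*R+1))) := by
      intro t w; ring
    rw [hrw x y, hrw x' y'] at h
    exact Nat.add_right_cancel h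
  have c1 : Nat.Coprime (E2 R) (R+1) := by
    have hE : E2 R = 1 + (R+1)*(2*R) := by unfold E2; ring
    rw [hE]
    exact (Nat.coprime_add_mul_left_left 1 (R+1) (2*R)).mpr (Nat.coprime_one_left _)
  have c2 : Nat.Coprime (E2 R) 2 := by
    have hE : E2 R = 1 + 2*((R+1)*R) := by unfold E2; ring
    rw [hE]
    exact (Nat.coprime_add_mul_left_left 1 2 ((R+1)*R)).mpr (Nat.coprime_one_left _)
  have hcop : Nat.Coprime (E2 R) (2*(R+1)^2) := Nat.Coprime.mul_right c2 (c1.pow_right 2)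
  have hm1 : y*(2*(R+1)^2) ≡ y'*(2*(R+1)^2) [MOD E2 R] := by
    have e1 : (E2 R * x + y*(2*(R+1)^2)) % E2 R = (y*(2*(R+1)^2)) % E2 R :=
      Nat.mul_add_mod _ _ _
    have e2 : (E2 R * x' + y'*(2*(R+1)^2)) % E2 R = (y'*(2*(R+1)^2)) % E2 R :=
      Nat.mul_add_mod _ _ _
    unfold Nat.ModEq
    rw [← e1, ← e2, mul_comm (E2 R) x, mul_comm (E2 R) x', h4]
  have hy1 : y = y' := by
    have := (hm1.cancel_right_of_coprime hcop.gcd_eq_one)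
    rw [Nat.ModEq, Nat.mod_eq_of_lt hy, Nat.mod_eq_of_lt hy'] at this
    exact this
  have hx1 : x = x' := by
    rw [hy1] at h4
    have h5 : x * E2 R = x' * E2 R := by omega
    have hpos : 0 < E2 R := by unfold E2; omega
    exact Nat.eq_of_mul_eq_mul_right hpos h5
  exact ⟨hx1, hy1, hz1, hu1, hv1⟩
def F (R:ℕ) (t : ℕ×ℕ×ℕ×ℕ) : ℕ := t.1*Dd R + t.2.1*Cc R + t.2.2.1*Bb R + t.2.2.2*Ee R
def box (R:ℕ) : Finset (ℕ×ℕ×ℕ×ℕ) :=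
  range (E2 R) ×ˢ range (R+1) ×ˢ range 2 ×ˢ range (R+1)

lemma A_pos (R:ℕ) : 0 < A R := by unfold A; positivity

lemma card_box (R:ℕ) : (box R).card = A R := by
  simp [box, A, E2]; ring

lemma mem_box (R:ℕ) (t : ℕ×ℕ×ℕ×ℕ) : t ∈ box R ↔
    t.1 < E2 R ∧ t.2.1 < R+1 ∧ t.2.2.1 < 2 ∧ t.2.2.2 < R+1 := by
  simp [box, Finset.mem_product]

end Skab
namespace Skab

lemma mem_iff (R n : ℕ) :
    n ∈ AddSubmonoid.closure ({A R, Bb R, Cc R, Dd R, Ee R} : Set ℕ) ↔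
      ∃ x, ∃ t ∈ box R, n = x * A R + F R t := by
  rw [mem_closure_iff]
  constructor
  · rintro ⟨x,y,z,u,v,rfl⟩
    obtain ⟨x',y',z',u',v',h1,h2,h3,h4,h5⟩ := norm R x y z u v
    refine ⟨x', (y',z',u',v'), (mem_box R _).mpr ⟨h1,h2,h3,h4⟩, ?_⟩
    show _ = x' * A R + (y'*Dd R + z'*Cc R + u'*Bb R + v'*Ee R)
    rw [← add_assoc, ← add_assoc, ← add_assoc]
    exact h5.symm
  · rintro ⟨x, ⟨y,z,u,v⟩, ht, rfl⟩
    refine ⟨x,y,z,u,v, ?_⟩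
    show x * A R + (y*Dd R + z*Cc R + u*Bb R + v*Ee R) = _
    ring

lemma res_injOn (R : ℕ) {t t' : ℕ×ℕ×ℕ×ℕ} (ht : t ∈ box R) (ht' : t' ∈ box R)
    (h : F R t % A R = F R t' % A R) : t = t' := by
  obtain ⟨y,z,u,v⟩ := t
  obtain ⟨y',z',u',v'⟩ := t'
  obtain ⟨hy,hz,hu,hv⟩ := (mem_box R _).mp ht
  obtain ⟨hy',hz',hu',hv'⟩ := (mem_box R _).mp ht'
  have e1 : F R (y,z,u,v) = y*Dd R + z*Cc R + u*Bb R + v*Ee R := rfl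
  have e2 : F R (y',z',u',v') = y'*Dd R + z'*Cc R + u'*Bb R + v'*Ee R := rfl
  have d1 : A R * (F R (y,z,u,v) / A R) + F R (y,z,u,v) % A R = F R (y,z,u,v) :=
    Nat.div_add_mod _ _
  have d2 : A R * (F R (y',z',u',v') / A R) + F R (y',z',u',v') % A R = F R (y',z',u',v') :=
    Nat.div_add_mod _ _
  have key : (F R (y',z',u',v') / A R) * A R + y*Dd R + z*Cc R + u*Bb R + v*Ee R
           = (F R (y,z,u,v) / A R) * A R + y'*Dd R + z'*Cc R + u'*Bb R + v'*Ee R := by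
    rw [e1, e2] at h ⊢; rw [e1] at d1; rw [e2] at d2
    zify at d1 d2 h ⊢
    linarith [d1, d2, h]
  have hres := inj R hy hz hu hv hy' hz' hu' hv' key
  simp only [Prod.mk.injEq]
  exact ⟨hres.2.1, hres.2.2.1, hres.2.2.2.1, hres.2.2.2.2⟩

lemma himg (R : ℕ) : (box R).image (fun t => F R t % A R) = range (A R) := by
  apply Finset.eq_of_subset_of_card_le
  · intro r hr
    simp only [Finset.mem_image] at hr
    obtain ⟨t, _, rfl⟩ := hr
    exact Finset.mem_range.mpr (Nat.mod_lt _ (A_pos R))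
  · rw [Finset.card_range, Finset.card_image_of_injOn (fun t ht t' ht' h => res_injOn R ht ht' h),
      card_box]

def G (R : ℕ) : Finset ℕ :=
  (box R).biUnion (fun t => (range (F R t / A R)).image (fun k => F R t % A R + A R * k))

lemma notmem_iff (R n : ℕ) :
    n ∉ AddSubmonoid.closure ({A R, Bb R, Cc R, Dd R, Ee R} : Set ℕ) ↔
      ∃ t ∈ box R, F R t % A R = n % A R ∧ n < F R t := by
  constructor
  · intro hn
    have hr : n % A R ∈ range (A R) := Finset.mem_range.mpr (Nat.mod_lt _ (A_pos R))
    rw [← himg R, Finset.mem_image] at hr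
    obtain ⟨t, ht, hres⟩ := hr
    refine ⟨t, ht, hres, ?_⟩
    by_contra hlt
    push_neg at hlt
    apply hn
    rw [mem_iff]
    have hdvd : A R ∣ n - F R t := (Nat.modEq_iff_dvd' hlt).mp hres
    obtain ⟨x, hx⟩ := hdvd
    refine ⟨x, t, ht, ?_⟩
    rw [mul_comm]
    omega
  · rintro ⟨t, ht, hres, hlt⟩ hn
    rw [mem_iff] at hn
    obtain ⟨x, t', ht', rfl⟩ := hn
    have h1 : (x * A R + F R t') % A R = F R t' % A R := by
      rw [mul_comm]
      exact Nat.mul_add_mod _ _ _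
    have : t = t' := res_injOn R ht ht' (by rw [hres, h1])
    subst this
    have : F R t ≤ x * A R + F R t := Nat.le_add_left _ _
    omega

lemma mem_G_iff (R n : ℕ) : n ∈ G R ↔ ∃ t ∈ box R, F R t % A R = n % A R ∧ n < F R t := by
  unfold G
  simp only [Finset.mem_biUnion, Finset.mem_image, Finset.mem_range]
  constructor
  · rintro ⟨t, ht, k, hk, rfl⟩
    have d := Nat.div_add_mod (F R t) (A R)
    refine ⟨t, ht, ?_, ?_⟩
    · rw [Nat.add_mul_mod_self_left]
      simp
    · have h1 : A R * (k+1) ≤ A R * (F R t / A R) := Nat.mul_le_mul_left _ hk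
      have h2 : A R * (k+1) = A R * k + A R := by ring
      have h3 := A_pos R
      omega
  · rintro ⟨t, ht, hres, hlt⟩
    have d := Nat.div_add_mod (F R t) (A R)
    have dn := Nat.div_add_mod n (A R)
    refine ⟨t, ht, n / A R, ?_, ?_⟩
    · by_contra hk
      push_neg at hk
      have h1 : A R * (F R t / A R) ≤ A R * (n / A R) := Nat.mul_le_mul_left _ hk
      omega
    · omega

lemma hF (R : ℕ) : 2 * ∑ t ∈ box R, F R t
    = A R * (2*(R+1)*R*Dd R + R*Cc R + Bb R + R*Ee R) := by
  unfold box F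
  simp only [Finset.sum_product, Finset.sum_add_distrib, Finset.sum_const, Finset.card_range,
    smul_eq_mul, ← Finset.sum_mul, Finset.mul_sum]
  simp only [Finset.card_product, Finset.card_range, ← Finset.mul_sum]
  have p1 : ∑ x ∈ Finset.range (E2 R), (R+1)*(2*(R+1))*x
      = (R+1)*(2*(R+1)) * ∑ x ∈ Finset.range (E2 R), x := (Finset.mul_sum _ _ _).symm
  have p2 : ∑ i ∈ Finset.range (R+1), 2*(R+1)*i
      = 2*(R+1) * ∑ i ∈ Finset.range (R+1), i := (Finset.mul_sum _ _ _).symm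
  have p3 : ∑ i ∈ Finset.range 2, (R+1)*i = (R+1) * 1 := by
    simp [Finset.sum_range_succ]
  have p4 : ∑ i ∈ Finset.range (R+1), 2*i
      = 2 * ∑ i ∈ Finset.range (R+1), i := (Finset.mul_sum _ _ _).symm
  rw [p1, p2, p3, p4]
  set S1 := ∑ i ∈ Finset.range (E2 R), i with hS1
  set S2 := ∑ i ∈ Finset.range (R+1), i with hS2
  have g1 : S1 * 2 = E2 R * (2*(R+1)*R) := by
    rw [hS1, Finset.sum_range_id_mul_two]
    have hsq : E2 R - 1 = 2*(R+1)*R := by unfold E2; omega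
    rw [hsq]
  have g2 : S2 * 2 = (R+1) * R := by
    rw [hS2, Finset.sum_range_id_mul_two]
    simp
  zify at g1 g2 ⊢
  unfold A Bb Cc Dd Ee E2 at *
  push_cast at *
  linear_combination (2*((R:ℤ)+1)^2*(4*((R:ℤ)+1)^4))*g1
    + (2*((R:ℤ)+1)*(2*((R:ℤ)+1)*R+1)*(((R:ℤ)+1)*(4*(R:ℤ)^3+12*(R:ℤ)^2+10*(R:ℤ)+4) + (4*((R:ℤ)+1)^4+1)))*g2

lemma card_G (R : ℕ) : (G R).card = ∑ t ∈ box R, F R t / A R := by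
  unfold G
  rw [Finset.card_biUnion]
  · refine Finset.sum_congr rfl fun t ht => ?_
    rw [Finset.card_image_of_injective _
        (fun k k' h => Nat.eq_of_mul_eq_mul_left (A_pos R) (by omega : A R * k = A R * k')),
      Finset.card_range]
  · intro t ht t' ht' hne
    rw [Function.onFun, Finset.disjoint_left]
    rintro n hn hn'
    simp only [Finset.mem_image, Finset.mem_range] at hn hn'
    obtain ⟨k, _, rfl⟩ := hn
    obtain ⟨k', _, hk'⟩ := hn'
    apply hne
    apply res_injOn R ht ht'
    have e1 : (F R t % A R + A R * k) % A R = F R t % A R := by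
      rw [Nat.add_mul_mod_self_left]; simp
    have e2 : (F R t' % A R + A R * k') % A R = F R t' % A R := by
      rw [Nat.add_mul_mod_self_left]; simp
    rw [← e1, ← e2, hk']

lemma sum_div (R : ℕ) :
    ∑ t ∈ box R, F R t / A R = (R+1)^2*(2*R^2+4*R+1)^2 := by
  have hmaster : A R * (∑ t ∈ box R, F R t / A R) + (∑ t ∈ box R, F R t % A R)
      = ∑ t ∈ box R, F R t := by
    rw [Finset.mul_sum, ← Finset.sum_add_distrib]
    exact Finset.sum_congr rfl fun t _ => Nat.div_add_mod _ _
  have hmod : ∑ r ∈ Finset.range (A R), r = ∑ t ∈ box R, F R t % A R := by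
    rw [← himg R, Finset.sum_image (fun t ht t' ht' h => res_injOn R ht ht' h)]
  have hmod2 : (∑ t ∈ box R, F R t % A R) * 2 = A R * (A R - 1) := by
    rw [← hmod]; exact Finset.sum_range_id_mul_two _
  have hsq : (R+1)^2 = R^2+2*R+1 := by ring
  have hA1 : A R - 1 = 4*(R+1)^3*R + 2*R^2+4*R+1 := by unfold A; omega
  have hA : A R = 4*(R+1)^3*R + 2*R^2+4*R+1 + 1 := by unfold A; omega
  rw [hA1] at hmod2
  have hFv := hF R
  have hexp : A R * (2 * ((R+1)^2*(2*R^2+4*R+1)^2)) + A R * (4*(R+1)^3*R + 2*R^2+4*R+1)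
      = A R * (2*(R+1)*R*Dd R + R*Cc R + Bb R + R*Ee R) := by
    unfold A Bb Cc Dd Ee; ring
  have hring : A R * (2 * (∑ t ∈ box R, F R t / A R))
      = A R * (∑ t ∈ box R, F R t / A R) + A R * (∑ t ∈ box R, F R t / A R) := by ring
  have key : A R * (2 * (∑ t ∈ box R, F R t / A R))
      = A R * (2 * ((R+1)^2*(2*R^2+4*R+1)^2)) := by omega
  have := Nat.eq_of_mul_eq_mul_left (A_pos R) key
  omega

end Skab

open Skab in
theorem stmt_12 (s : ℕ) (hs : 1 ≤ s) (q q₀ : ℕ)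
    (hq : q = 2 ^ (2 * s + 1)) (hq₀ : q₀ = 2 ^ s) :
    Nat.card {n : ℕ //
        n ∉ AddSubmonoid.closure
          ({q ^ 2 - 2 * q₀ * q + q, q ^ 2 - q₀ * q + q₀, q ^ 2 - q + 2 * q₀,
            q ^ 2, q ^ 2 + 1} : Set ℕ)} =
      (q ^ 3 - 2 * q ^ 2 + q) / 2 := by
  have hq0pos : 0 < q₀ := by rw [hq₀]; positivity
  obtain ⟨R, hR⟩ : ∃ R, q₀ = R + 1 := ⟨q₀ - 1, by omega⟩
  have hq2 : q = 2 * (R+1)^2 := by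
    rw [hq, ← hR, hq₀, show 2*s+1 = s*2+1 by ring, pow_succ, pow_mul]
    ring
  have hA : q ^ 2 - 2 * q₀ * q + q = A R := by
    have h1 : q^2 = 2 * q₀ * q + 4 * ((R+1)^3 * R) := by rw [hq2, hR]; ring
    have h2 : q = 2 * (R+1)^2 := hq2
    unfold A
    have h3 : 4*(R+1)^3*R = 4*((R+1)^3*R) := by ring
    omega
  have hB : q ^ 2 - q₀ * q + q₀ = Bb R := by
    have h1 : q^2 = q₀ * q + 2 * ((R+1)^3 * (2*R+1)) := by rw [hq2, hR]; ring
    have h2 : (R+1)*(4*R^3+10*R^2+8*R+3) = 2 * ((R+1)^3 * (2*R+1)) + (R+1) := by ring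
    unfold Bb
    omega
  have hC : q ^ 2 - q + 2 * q₀ = Cc R := by
    have h1 : q^2 = q + 2 * ((R+1)^2 * (2*R^2+4*R+1)) := by rw [hq2]; ring
    have h2 : (R+1)*(4*R^3+12*R^2+10*R+4) = 2 * ((R+1)^2 * (2*R^2+4*R+1)) + 2*(R+1) := by ring
    unfold Cc
    omega
  have hD : q ^ 2 = Dd R := by rw [hq2]; unfold Dd; ring
  have hE : q ^ 2 + 1 = Ee R := by rw [hq2]; unfold Ee; ring
  have hset : ({q ^ 2 - 2 * q₀ * q + q, q ^ 2 - q₀ * q + q₀, q ^ 2 - q + 2 * q₀,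
      q ^ 2, q ^ 2 + 1} : Set ℕ) = {A R, Bb R, Cc R, Dd R, Ee R} := by
    rw [hA, hB, hC, hE, hD]
  have hRHS : (q ^ 3 - 2 * q ^ 2 + q) / 2 = (R+1)^2*(2*R^2+4*R+1)^2 := by
    have h1 : q^3 = 2 * q^2 + 8 * ((R+1)^4 * (R^2+2*R)) := by rw [hq2]; ring
    have h2 : q = 2*(R+1)^2 := hq2
    have h4 : 2*((R+1)^2*(2*R^2+4*R+1)^2) = 8*((R+1)^4*(R^2+2*R)) + 2*(R+1)^2 := by ring
    omega
  rw [hset, hRHS]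
  have e : {n : ℕ // n ∉ AddSubmonoid.closure ({A R, Bb R, Cc R, Dd R, Ee R} : Set ℕ)}
      ≃ {n : ℕ // n ∈ G R} :=
    Equiv.subtypeEquivRight fun n => by rw [notmem_iff, ← mem_G_iff]
  rw [Nat.card_congr e, Nat.card_eq_fintype_card, Fintype.card_coe, card_G, Skab.sum_div]
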